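/- Let x₁, ..., xₙ ∈ ℝⁿ satisfy det(x₁,...,xₙ) = ∑_{i=1}^n |xᵢ|ⁿ / n. Then |x₁| = |x₂| = ... = |xₙ| and, if this common norm is nonzero, the vectors x₁,...,xₙ are pairwise orthogonal and form a positively oriented basis of ℝⁿ. -/

import Mathlib

open Finset

/-- Equality/contradiction version of AM–GM: if the arithmetic mean of the `n`-th powers
is at most the product, then all values are equal. -/
lemma amgm_aux {n : ℕ} (hn : 0 < n) (a : Fin n → ℝ) (hpos : ∀ i, 0 < a i)
    (hle : ∑ i, a i ^ n / n ≤ ∏ i, a i) : ∀ i j, a i = a j := by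
  haveI : Nonempty (Fin n) := ⟨⟨0, hn⟩⟩
  have hnR : (0 : ℝ) < n := by exact_mod_cast hn
  obtain ⟨A, hA⟩ : ∃ A : ℝ, A = ∑ i, a i ^ n / n := ⟨_, rfl⟩
  rw [← hA] at hle
  have hApos : 0 < A := by
    rw [hA]
    apply Finset.sum_pos
    · intro i _
      exact div_pos (pow_pos (hpos i) n) hnR
    · exact Finset.univ_nonempty
  have key : ∀ k, a k ^ n = A := by
    by_contra hcon
    push_neg at hcon
    obtain ⟨k, hk⟩ := hcon
    have hlt : ∑ i, Real.log (a i ^ n / A) < ∑ i, (a i ^ n / A - 1) := by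
      apply Finset.sum_lt_sum
      · intro i _
        exact Real.log_le_sub_one_of_pos (div_pos (pow_pos (hpos i) n) hApos)
      · refine ⟨k, Finset.mem_univ k, Real.log_lt_sub_one_of_pos
            (div_pos (pow_pos (hpos k) n) hApos) ?_⟩
        intro h1
        exact hk (by field_simp at h1; linarith)
    have hsum : ∑ i, a i ^ n = n * A := by
      rw [hA, ← Finset.sum_div]
      field_simp
    have hR : ∑ i, (a i ^ n / A - 1) = 0 := by
      rw [Finset.sum_sub_distrib, ← Finset.sum_div, hsum, Finset.sum_const]
      simp
      field_simp
      ring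
    have hL : ∑ i, Real.log (a i ^ n / A) = Real.log ((∏ i, a i) ^ n / A ^ n) := by
      rw [← Real.log_prod (fun i _ => (div_pos (pow_pos (hpos i) n) hApos).ne')]
      congr 1
      rw [Finset.prod_div_distrib, Finset.prod_pow, Finset.prod_const]
      simp
    have hprodpos : 0 < ∏ i, a i := Finset.prod_pos fun i _ => hpos i
    have hlt2 : (∏ i, a i) ^ n / A ^ n < 1 := by
      rw [← Real.log_neg_iff (by positivity)]
      rw [hL, hR] at hlt
      linarith
    have : (∏ i, a i) ^ n < A ^ n := by
      rw [div_lt_one (by positivity)] at hlt2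
      exact hlt2
    have : ∏ i, a i < A := lt_of_pow_lt_pow_left₀ n hApos.le this
    linarith
  intro i j
  have h1 : a i ^ n = a j ^ n := by rw [key i, key j]
  exact le_antisymm
    (le_of_pow_le_pow_left₀ hn.ne' (hpos j).le h1.le)
    (le_of_pow_le_pow_left₀ hn.ne' (hpos i).le h1.ge)

theorem equality_case_det
    {n : ℕ} [NeZero n] (x : Fin n → EuclideanSpace ℝ (Fin n))
    (heq : (Matrix.of fun i j => x j i).det = ∑ i, ‖x i‖ ^ n / n) :
    (∀ i j, ‖x i‖ = ‖x j‖) ∧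
      ((∃ i, ‖x i‖ ≠ 0) →
        (∀ i j, i ≠ j → inner ℝ (x i) (x j) = (0 : ℝ)) ∧
          0 < (Matrix.of fun i j => x j i).det) := by
  classical
  haveI : WellFoundedLT (Fin n) := inferInstance
  have hn : 0 < n := Nat.pos_of_ne_zero (NeZero.ne n)
  haveI : Nonempty (Fin n) := ⟨⟨0, hn⟩⟩
  haveI : Fact (Module.finrank ℝ (EuclideanSpace ℝ (Fin n)) = n) :=
    ⟨finrank_euclideanSpace_fin⟩
  have hdim : Module.finrank ℝ (EuclideanSpace ℝ (Fin n)) = Fintype.card (Fin n) := by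
    simp [finrank_euclideanSpace_fin]
  set b : OrthonormalBasis (Fin n) ℝ (EuclideanSpace ℝ (Fin n)) :=
    InnerProductSpace.gramSchmidtOrthonormalBasis (𝕜 := ℝ) hdim x with hbdef
  have hb : b.toBasis.det x = ∏ i, inner ℝ (b i) (x i) :=
    InnerProductSpace.gramSchmidtOrthonormalBasis_det (𝕜 := ℝ) hdim x
  set e : OrthonormalBasis (Fin n) ℝ (EuclideanSpace ℝ (Fin n)) :=
    EuclideanSpace.basisFun (Fin n) ℝ with hedef
  set D := (Matrix.of fun i j => x j i).det with hD
  have hstd : e.toBasis.det x = D := by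
    rw [Module.Basis.det_apply]
    congr 1
  set o : Orientation ℝ (EuclideanSpace ℝ (Fin n)) (Fin n) := e.toBasis.orientation with hodef
  have h1 : |o.volumeForm x| = |e.toBasis.det x| := o.volumeForm_robust' e x
  have h2 : |o.volumeForm x| = |b.toBasis.det x| := o.volumeForm_robust' b x
  have habs : |D| = ∏ i, |(inner ℝ (b i) (x i) : ℝ)| := by
    rw [← hstd, ← h1, h2, hb, Finset.abs_prod]
  -- Cauchy–Schwarz termwise
  have hCS : ∀ i, |(inner ℝ (b i) (x i) : ℝ)| ≤ ‖x i‖ := by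
    intro i
    have := abs_real_inner_le_norm (b i) (x i)
    simpa [b.orthonormal.1 i] using this
  have hDP : |D| ≤ ∏ i, ‖x i‖ := by
    rw [habs]
    exact Finset.prod_le_prod (fun i _ => abs_nonneg _) fun i _ => hCS i
  have hSnonneg : (0:ℝ) ≤ ∑ i, ‖x i‖ ^ n / n := by
    apply Finset.sum_nonneg
    intro i _
    positivity
  have hDnonneg : 0 ≤ D := heq ▸ hSnonneg
  have hchain : ∑ i, ‖x i‖ ^ n / n ≤ ∏ i, ‖x i‖ := by
    calc ∑ i, ‖x i‖ ^ n / n = D := heq.symm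
    _ = |D| := (abs_of_nonneg hDnonneg).symm
    _ ≤ ∏ i, ‖x i‖ := hDP
  -- first conjunct
  have hnorms : ∀ i j, ‖x i‖ = ‖x j‖ := by
    by_cases hz : ∀ i, 0 < ‖x i‖
    · exact amgm_aux hn _ hz hchain
    · push_neg at hz
      obtain ⟨k, hk⟩ := hz
      have hk0 : ‖x k‖ = 0 := le_antisymm hk (norm_nonneg _)
      have hP0 : ∏ i, ‖x i‖ = 0 :=
        Finset.prod_eq_zero (Finset.mem_univ k) hk0
      have hS0 : ∑ i, ‖x i‖ ^ n / n = 0 :=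
        le_antisymm (hP0 ▸ hchain) hSnonneg
      have hall : ∀ i, ‖x i‖ = 0 := by
        intro i
        have h := (Finset.sum_eq_zero_iff_of_nonneg
          (fun i _ => by positivity)).mp hS0 i (Finset.mem_univ i)
        rcases div_eq_zero_iff.mp h with h' | h'
        · exact pow_eq_zero_iff hn.ne' |>.mp h'
        · exact absurd h' (Nat.cast_ne_zero.mpr hn.ne')
      intro i j; rw [hall i, hall j]
  refine ⟨hnorms, ?_⟩
  rintro ⟨k, hk⟩
  have hpos : ∀ i, 0 < ‖x i‖ := fun i =>
    (norm_nonneg _).lt_of_ne' (by rw [hnorms i k] at *; exact hk)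
  have hPpos : 0 < ∏ i, ‖x i‖ := Finset.prod_pos fun i _ => hpos i
  -- the sum equals the product
  have hPS : ∑ i, ‖x i‖ ^ n / n = ∏ i, ‖x i‖ := by
    have hc : ∀ i, ‖x i‖ = ‖x k‖ := fun i => hnorms i k
    have h1 : ∑ i, ‖x i‖ ^ n / n = ‖x k‖ ^ n := by
      rw [Finset.sum_congr rfl fun i _ => by rw [hc i]]
      rw [Finset.sum_const]
      simp
      field_simp
    have h2 : ∏ i, ‖x i‖ = ‖x k‖ ^ n := by
      rw [Finset.prod_congr rfl fun i _ => hc i, Finset.prod_const]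
      simp
    rw [h1, h2]
  have hDval : D = ∏ i, ‖x i‖ := by rw [heq, hPS]
  have hDpos : 0 < D := hDval ▸ hPpos
  refine ⟨?_, hDpos⟩
  -- equality in the product of Cauchy–Schwarz
  have hprodeq : ∏ i, |(inner ℝ (b i) (x i) : ℝ)| = ∏ i, ‖x i‖ := by
    rw [← habs, abs_of_nonneg hDnonneg, hDval]
  have hterm : ∀ i, |(inner ℝ (b i) (x i) : ℝ)| = ‖x i‖ := by
    by_contra hcon
    push_neg at hcon
    obtain ⟨m, hm⟩ := hcon
    have hmlt : |(inner ℝ (b m) (x m) : ℝ)| < ‖x m‖ := lt_of_le_of_ne (hCS m) hm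
    have hppos : 0 < ∏ i, |(inner ℝ (b i) (x i) : ℝ)| := hprodeq ▸ hPpos
    have hfpos : ∀ i, 0 < |(inner ℝ (b i) (x i) : ℝ)| := by
      intro i
      rcases (abs_nonneg ((inner ℝ (b i) (x i) : ℝ))).lt_or_eq with h | h
      · exact h
      · exact absurd (Finset.prod_eq_zero (Finset.mem_univ i) h.symm) hppos.ne'
    have : ∏ i, |(inner ℝ (b i) (x i) : ℝ)| < ∏ i, ‖x i‖ :=
      Finset.prod_lt_prod (fun i _ => hfpos i) (fun i _ => hCS i)
        ⟨m, Finset.mem_univ m, hmlt⟩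
    exact absurd hprodeq this.ne
  -- each x i is parallel to b i
  have hpar : ∀ i, ∃ r : ℝ, r ≠ 0 ∧ x i = r • b i := by
    intro i
    have hb0 : (b i : EuclideanSpace ℝ (Fin n)) ≠ 0 := by
      intro h
      have := b.orthonormal.1 i
      rw [h] at this
      simp at this
    have hx0 : x i ≠ 0 := fun h => (hpos i).ne' (by simp [h])
    have heqn : ‖(inner ℝ (b i) (x i) : ℝ)‖ = ‖b i‖ * ‖x i‖ := by
      rw [Real.norm_eq_abs, hterm i, b.orthonormal.1 i, one_mul]
    exact (norm_inner_eq_norm_iff hb0 hx0).mp heqn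
  intro i j hij
  obtain ⟨r, _, hr⟩ := hpar i
  obtain ⟨s, _, hs⟩ := hpar j
  rw [hr, hs, real_inner_smul_left, real_inner_smul_right,
    b.orthonormal.2 hij, mul_zero, mul_zero]
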